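/- Lemma: every matrix Z of the one-level discretized HJB setup is an M-matrix: Z is invertible and every entry of Z⁻¹ is nonnegative. (The proof exhibits the vector w with w_l = 1 + l·ε, ε = r·Δx/K, which satisfies w_l > 0 and (Z·w)_l > 0 for every row l.) -/

import Mathlib

open Matrix in
lemma key_mono {n : ℕ} [NeZero n] (A : Matrix (Fin n) (Fin n) ℝ)
    (w : Fin n → ℝ) (hw : ∀ l, 0 < w l)
    (hoff : ∀ l j, l ≠ j → A l j ≤ 0)
    (hAw : ∀ l, 0 < A.mulVec w l) :
    ∀ x : Fin n → ℝ, (∀ l, 0 ≤ A.mulVec x l) → ∀ l, 0 ≤ x l := by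
  intro x hx l
  obtain ⟨l0, -, hl0⟩ := Finset.exists_min_image Finset.univ (fun j => x j / w j)
    ⟨l, Finset.mem_univ l⟩
  simp only [Finset.mem_univ, forall_true_left] at hl0
  set t := x l0 / w l0 with ht
  have hxl0 : x l0 = t * w l0 := by
    rw [ht, div_mul_cancel₀ _ (hw l0).ne']
  have hmono : ∀ j, t * w j ≤ x j := by
    intro j
    have := hl0 j
    rw [le_div_iff₀ (hw j)] at this
    linarith [this]
  rcases le_or_gt 0 t with h0 | h0
  · have := hmono l
    nlinarith [hw l]
  · exfalso
    have hle : A.mulVec x l0 ≤ t * A.mulVec w l0 := by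
      simp only [Matrix.mulVec, dotProduct]
      rw [Finset.mul_sum]
      apply Finset.sum_le_sum
      intro j _
      rcases eq_or_ne l0 j with rfl | hne
      · rw [hxl0]; ring_nf; exact le_rfl
      · have h1 := hoff l0 j hne
        have h2 := hmono j
        nlinarith
    nlinarith [hx l0, hAw l0]

noncomputable def oneLevelHJBEntry (dx r : ℝ) (c1 c2 ρ θ ψ : ℕ → ℝ) (l j : ℕ) : ℝ :=
  if l = 0 then (if j = 0 then 1 else 0)
  else
    -- upwinding indicator
    let I : ℝ := if 2 * c2 l < dx * |c1 l| then 1 else 0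
    if j = l then
      ρ l * θ l * (ψ l * (r + 2 * c2 l / dx ^ 2 + I * |c1 l| / dx) + (1 - ψ l) / dx)
        + ρ l * (1 - θ l) + (1 - ρ l)
    else if j = l + 1 then
      -(ρ l * θ l * ψ l * (c2 l / dx ^ 2 + c1 l / (2 * dx) + I * |c1 l| / (2 * dx)))
    else if j + 1 = l then
      ρ l * θ l * (-(ψ l * (c2 l / dx ^ 2 - c1 l / (2 * dx) + I * |c1 l| / (2 * dx)))
        - (1 - ψ l) / dx)
    else 0


lemma oneLevelHJB_aux_algB (dx eps wl : ℝ) (hdx : dx ≠ 0) :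
    -(1 / dx) * (wl - eps) + 1 / dx * wl = eps / dx := by
  field_simp; ring

lemma oneLevelHJB_aux_algC (dx r eps wl a b iv : ℝ) (hdx : dx ≠ 0) :
    -(b / dx ^ 2 - a / (2 * dx) + iv / (2 * dx)) * (wl - eps)
      + ((r + 2 * b / dx ^ 2 + iv / dx) * wl
      + -(b / dx ^ 2 + a / (2 * dx) + iv / (2 * dx)) * (wl + eps))
      = r * wl - eps * a / dx := by
  field_simp; ring

set_option maxHeartbeats 1000000 in
theorem oneLevel_Z_is_Mmatrix
    (M : ℕ) (hM : 2 ≤ M) (dx r K : ℝ) (hdx : 0 < dx) (hr : 0 < r) (hK : 0 < K)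
    (c1 c2 ρ θ ψ : ℕ → ℝ)
    (hc2 : ∀ l < M, 0 < c2 l) (hc1 : ∀ l < M, |c1 l| ≤ K)
    (hρ : ∀ l < M, ρ l = 0 ∨ ρ l = 1)
    (hθ : ∀ l < M, θ l = 0 ∨ θ l = 1)
    (hψ : ∀ l < M, ψ l = 0 ∨ ψ l = 1)
    (hψM : ψ (M - 1) = 0)
    (Z : Matrix (Fin M) (Fin M) ℝ)
    (hZ : ∀ l j : Fin M, Z l j = oneLevelHJBEntry dx r c1 c2 ρ θ ψ l.val j.val) :
    IsUnit Z ∧ ∀ l j, 0 ≤ Z⁻¹ l j := by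
  haveI : NeZero M := ⟨by omega⟩
  have hdx' : dx ≠ 0 := hdx.ne'
  set ε := r * dx / K with hε_def
  have hε : 0 < ε := by positivity
  set w : Fin M → ℝ := fun j => 1 + ((j.val : ℝ) + 1) * ε with hw_def
  have hwpos : ∀ j : Fin M, 0 < w j := by
    intro j; simp only [hw_def]; positivity
  -- sign facts for the sub/super-diagonal brackets
  have hbeta : ∀ l : Fin M,
      0 ≤ c2 l.val / dx ^ 2 + c1 l.val / (2 * dx)
        + (if 2 * c2 l.val < dx * |c1 l.val| then (1:ℝ) else 0) * |c1 l.val| / (2 * dx) := by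
    intro l
    have hc2' := hc2 l.val l.isLt
    split_ifs with hI
    · have h1 : (0:ℝ) ≤ c1 l.val + |c1 l.val| := by linarith [neg_abs_le (c1 l.val)]
      have he : c2 l.val / dx ^ 2 + c1 l.val / (2 * dx) + 1 * |c1 l.val| / (2 * dx)
          = (2 * c2 l.val + dx * (c1 l.val + |c1 l.val|)) / (2 * dx ^ 2) := by
        field_simp; ring
      rw [he]
      apply div_nonneg _ (by positivity)
      nlinarith [mul_nonneg hdx.le h1]
    · push_neg at hI
      have h2 : dx * (-|c1 l.val|) ≤ dx * c1 l.val :=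
        mul_le_mul_of_nonneg_left (neg_abs_le _) hdx.le
      have he : c2 l.val / dx ^ 2 + c1 l.val / (2 * dx) + 0 * |c1 l.val| / (2 * dx)
          = (2 * c2 l.val + dx * c1 l.val) / (2 * dx ^ 2) := by
        field_simp; ring
      rw [he]
      apply div_nonneg _ (by positivity)
      nlinarith
  have hgamma : ∀ l : Fin M,
      0 ≤ c2 l.val / dx ^ 2 - c1 l.val / (2 * dx)
        + (if 2 * c2 l.val < dx * |c1 l.val| then (1:ℝ) else 0) * |c1 l.val| / (2 * dx) := by
    intro l
    have hc2' := hc2 l.val l.isLt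
    split_ifs with hI
    · have h1 : (0:ℝ) ≤ |c1 l.val| - c1 l.val := by linarith [le_abs_self (c1 l.val)]
      have he : c2 l.val / dx ^ 2 - c1 l.val / (2 * dx) + 1 * |c1 l.val| / (2 * dx)
          = (2 * c2 l.val + dx * (|c1 l.val| - c1 l.val)) / (2 * dx ^ 2) := by
        field_simp; ring
      rw [he]
      apply div_nonneg _ (by positivity)
      nlinarith [mul_nonneg hdx.le h1]
    · push_neg at hI
      have h2 : dx * c1 l.val ≤ dx * |c1 l.val| :=
        mul_le_mul_of_nonneg_left (le_abs_self _) hdx.le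
      have he : c2 l.val / dx ^ 2 - c1 l.val / (2 * dx) + 0 * |c1 l.val| / (2 * dx)
          = (2 * c2 l.val - dx * c1 l.val) / (2 * dx ^ 2) := by
        field_simp; ring
      rw [he]
      apply div_nonneg _ (by positivity)
      nlinarith
  have hdxinv : (0:ℝ) ≤ dx⁻¹ := inv_nonneg.mpr hdx.le
  -- off-diagonal entries are nonpositive
  have hoff : ∀ l j : Fin M, l ≠ j → Z l j ≤ 0 := by
    intro l j hne
    have hjl : (j : ℕ) ≠ (l : ℕ) := fun h => hne (Fin.ext h.symm)
    rw [hZ]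
    by_cases hl0 : (l : ℕ) = 0
    · have hj0 : (j : ℕ) ≠ 0 := hl0 ▸ hjl
      simp [oneLevelHJBEntry, hl0, hj0]
    · simp only [oneLevelHJBEntry]
      rw [if_neg hl0, if_neg hjl]
      rcases hρ l.val l.isLt with h1 | h1
      · rw [h1]; split_ifs <;> ring_nf <;> try linarith [hdxinv]
      rcases hθ l.val l.isLt with h2 | h2
      · rw [h1, h2]; split_ifs <;> ring_nf <;> try linarith [hdxinv]
      rcases hψ l.val l.isLt with h3 | h3
      · rw [h1, h2, h3]; split_ifs <;> ring_nf <;> try linarith [hdxinv]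
      · have hb := hbeta l
        have hg := hgamma l
        rw [h1, h2, h3]
        split_ifs at hb hg ⊢ <;> ring_nf at hb hg ⊢ <;> try linarith [hdxinv, hb, hg]
  -- the weighted row sums are positive
  have hAw : ∀ l : Fin M, 0 < Z.mulVec w l := by
    intro l
    have hS : Z.mulVec w l = ∑ j : Fin M, Z l j * w j := by
      simp [Matrix.mulVec, dotProduct]
    rw [hS]
    by_cases hl0 : (l : ℕ) = 0
    · rw [Finset.sum_eq_single l]
      · have hd : Z l l = 1 := by
          rw [hZ]; simp [oneLevelHJBEntry, hl0]
        rw [hd, one_mul]; exact hwpos l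
      · intro b _ hb
        have hb' : (b : ℕ) ≠ 0 := fun h => hb (Fin.ext (by omega))
        rw [hZ]; simp [oneLevelHJBEntry, hl0, hb']
      · intro h; exact absurd (Finset.mem_univ l) h
    · have hl1 : 1 ≤ (l : ℕ) := by omega
      rcases hρ l.val l.isLt with h1 | h1
      · -- identity row
        rw [Finset.sum_eq_single l]
        · have hd : Z l l = 1 := by
            rw [hZ]; simp only [oneLevelHJBEntry, h1]
            split_ifs <;> first | omega | ring
          rw [hd, one_mul]; exact hwpos l
        · intro b _ hb
          have hb' : (b : ℕ) ≠ (l : ℕ) := fun h => hb (Fin.ext h)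
          rw [hZ]; simp only [oneLevelHJBEntry, h1]
          split_ifs <;> first | omega | ring
        · intro h; exact absurd (Finset.mem_univ l) h
      rcases hθ l.val l.isLt with h2 | h2
      · -- identity row
        rw [Finset.sum_eq_single l]
        · have hd : Z l l = 1 := by
            rw [hZ]; simp only [oneLevelHJBEntry, h1, h2]
            split_ifs <;> first | omega | ring
          rw [hd, one_mul]; exact hwpos l
        · intro b _ hb
          have hb' : (b : ℕ) ≠ (l : ℕ) := fun h => hb (Fin.ext h)
          rw [hZ]; simp only [oneLevelHJBEntry, h1, h2]
          split_ifs <;> first | omega | ring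
        · intro h; exact absurd (Finset.mem_univ l) h
      set lm : Fin M := ⟨l.val - 1, by omega⟩ with hlm_def
      have hlmv : (lm : ℕ) = l.val - 1 := rfl
      have hlm_ne : lm ≠ l := by
        intro h; have h' := congrArg Fin.val h; rw [hlmv] at h'; omega
      have hlmcast : ((lm : ℕ) : ℝ) = (l.val : ℝ) - 1 := by
        rw [hlmv, Nat.cast_sub hl1]; norm_num
      have hwm : w lm = w l - ε := by
        simp only [hw_def]; rw [hlmcast]; ring
      have e1 : (lm : ℕ) ≠ (l : ℕ) := by rw [hlmv]; omega
      have e2 : (lm : ℕ) ≠ (l : ℕ) + 1 := by rw [hlmv]; omega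
      have e3 : (lm : ℕ) + 1 = (l : ℕ) := by rw [hlmv]; omega
      rcases hψ l.val l.isLt with h3 | h3
      · -- two-entry row : diagonal 1/dx, subdiagonal -1/dx
        have hzl : Z l l = 1 / dx := by
          rw [hZ]; simp only [oneLevelHJBEntry, h1, h2, h3]
          split_ifs <;> first | omega | ring
        have hzlm : Z l lm = -(1 / dx) := by
          rw [hZ]; simp only [oneLevelHJBEntry, h1, h2, h3]
          split_ifs <;> first | omega | ring
        have hsub : ∑ j : Fin M, Z l j * w j
            = ∑ j ∈ ({lm, l} : Finset (Fin M)), Z l j * w j := by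
          refine (Finset.sum_subset (Finset.subset_univ _) ?_).symm
          intro b _ hb
          simp only [Finset.mem_insert, Finset.mem_singleton, not_or] at hb
          obtain ⟨hb1, hb2⟩ := hb
          have f1 : (b : ℕ) ≠ (l : ℕ) := fun h => hb2 (Fin.ext h)
          have f3 : ¬((b : ℕ) + 1 = (l : ℕ)) := by
            intro h; exact hb1 (Fin.ext (by rw [hlmv]; omega))
          rw [hZ]; simp only [oneLevelHJBEntry, h1, h2, h3]
          split_ifs <;> first | omega | ring
        have hgoal : Z l lm * w lm + Z l l * w l = ε / dx := by
          rw [hzl, hzlm, hwm]; exact oneLevelHJB_aux_algB dx ε (w l) hdx'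
        rw [hsub, Finset.sum_insert (by simpa using hlm_ne), Finset.sum_singleton, hgoal]
        positivity
      · -- full three-entry row
        have hlM : (l : ℕ) ≠ M - 1 := by
          intro h; rw [h, hψM] at h3; norm_num at h3
        have hlp_lt : (l : ℕ) + 1 < M := by omega
        set lp : Fin M := ⟨l.val + 1, hlp_lt⟩ with hlp_def
        have hlpv : (lp : ℕ) = l.val + 1 := rfl
        have hlp_ne : l ≠ lp := by
          intro h; have h' := congrArg Fin.val h; rw [hlpv] at h'; omega
        have hlmp_ne : lm ≠ lp := by
          intro h; have h' := congrArg Fin.val h; rw [hlmv, hlpv] at h'; omega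
        have hwp : w lp = w l + ε := by
          simp only [hw_def]
          rw [show ((lp : ℕ) : ℝ) = (l.val : ℝ) + 1 by rw [hlpv]; push_cast; ring]
          ring
        have g1 : (lp : ℕ) ≠ (l : ℕ) := by rw [hlpv]; omega
        have g2 : (lp : ℕ) = (l : ℕ) + 1 := hlpv
        have hzl : Z l l = r + 2 * c2 l.val / dx ^ 2
            + (if 2 * c2 l.val < dx * |c1 l.val| then (1:ℝ) else 0) * |c1 l.val| / dx := by
          rw [hZ]; simp only [oneLevelHJBEntry, h1, h2, h3]
          split_ifs <;> first | omega | ring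
        have hzlm : Z l lm = -(c2 l.val / dx ^ 2 - c1 l.val / (2 * dx)
            + (if 2 * c2 l.val < dx * |c1 l.val| then (1:ℝ) else 0) * |c1 l.val| / (2 * dx)) := by
          rw [hZ]; simp only [oneLevelHJBEntry, h1, h2, h3]
          split_ifs <;> first | omega | ring
        have hzlp : Z l lp = -(c2 l.val / dx ^ 2 + c1 l.val / (2 * dx)
            + (if 2 * c2 l.val < dx * |c1 l.val| then (1:ℝ) else 0) * |c1 l.val| / (2 * dx)) := by
          rw [hZ]; simp only [oneLevelHJBEntry, h1, h2, h3]
          split_ifs <;> first | omega | ring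
        have hsub : ∑ j : Fin M, Z l j * w j
            = ∑ j ∈ ({lm, l, lp} : Finset (Fin M)), Z l j * w j := by
          refine (Finset.sum_subset (Finset.subset_univ _) ?_).symm
          intro b _ hb
          simp only [Finset.mem_insert, Finset.mem_singleton, not_or] at hb
          obtain ⟨hb1, hb2, hb3⟩ := hb
          have f1 : (b : ℕ) ≠ (l : ℕ) := fun h => hb2 (Fin.ext h)
          have f2 : ¬((b : ℕ) = (l : ℕ) + 1) := by
            intro h; exact hb3 (Fin.ext (by rw [hlpv]; omega))
          have f3 : ¬((b : ℕ) + 1 = (l : ℕ)) := by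
            intro h; exact hb1 (Fin.ext (by rw [hlmv]; omega))
          rw [hZ]; simp only [oneLevelHJBEntry, h1, h2, h3]
          split_ifs <;> first | omega | ring
        have hgoal : Z l lm * w lm + (Z l l * w l + Z l lp * w lp)
            = r * w l - ε * c1 l.val / dx := by
          rw [hzlm, hzl, hzlp, hwm, hwp]
          have := oneLevelHJB_aux_algC dx r ε (w l) (c1 l.val) (c2 l.val)
            ((if 2 * c2 l.val < dx * |c1 l.val| then (1:ℝ) else 0) * |c1 l.val|) hdx'
          linear_combination this
        rw [hsub, Finset.sum_insert (by simp only [Finset.mem_insert,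
            Finset.mem_singleton, not_or]; exact ⟨hlm_ne, hlmp_ne⟩),
          Finset.sum_insert (by simpa using hlp_ne), Finset.sum_singleton, hgoal]
        have hc1K : c1 l.val ≤ K := le_trans (le_abs_self _) (hc1 l.val l.isLt)
        have h1' : ε * c1 l.val ≤ r * dx := by
          rw [hε_def, div_mul_eq_mul_div, div_le_iff₀ hK]
          nlinarith [mul_pos hr hdx]
        have hwl : w l = 1 + ((l.val : ℝ) + 1) * ε := by simp only [hw_def]
        rw [sub_pos, div_lt_iff₀ hdx]
        calc ε * c1 l.val ≤ r * dx := h1'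
          _ < r * w l * dx := by
              rw [hwl]
              nlinarith [mul_pos (mul_pos (mul_pos hr
                (show (0:ℝ) < (l.val : ℝ) + 1 by positivity)) hε) hdx]
  -- assemble
  have hunit : IsUnit Z := by
    rw [← Matrix.mulVec_injective_iff_isUnit]
    intro x y hxy
    have hz1 : ∀ i, 0 ≤ Z.mulVec (x - y) i := by
      intro i; rw [Matrix.mulVec_sub, hxy]; simp
    have hz2 : ∀ i, 0 ≤ Z.mulVec (y - x) i := by
      intro i; rw [Matrix.mulVec_sub, hxy]; simp
    have p1 := key_mono Z w hwpos hoff hAw _ hz1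
    have p2 := key_mono Z w hwpos hoff hAw _ hz2
    funext i
    have q1 := p1 i
    have q2 := p2 i
    simp only [Pi.sub_apply] at q1 q2
    linarith
  refine ⟨hunit, fun l j => ?_⟩
  have hdet : IsUnit Z.det := (Matrix.isUnit_iff_isUnit_det Z).mp hunit
  have hinv : Z * Z⁻¹ = 1 := Matrix.mul_nonsing_inv Z hdet
  refine key_mono Z w hwpos hoff hAw (fun i => Z⁻¹ i j) (fun i => ?_) l
  have he : Z.mulVec (fun i => Z⁻¹ i j) i = (Z * Z⁻¹) i j := by
    simp [Matrix.mulVec, dotProduct, Matrix.mul_apply]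
  rw [he, hinv]
  rcases eq_or_ne i j with h | h <;> simp [Matrix.one_apply, h]
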